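/- Let x, x' ∈ ℝ^d. If x ≼icx x' and x' ≼icx x in empirical increasing convex order, then x' is a permutation of x, i.e., there is a permutation π of {1,…,d} with x'ᵢ = x_{π(i)} for all i. Consequently, the relation ≼icx is a partial order (reflexive, transitive, and antisymmetric) on the set ℝ^d_↑ of nondecreasingly sorted vectors in ℝ^d. -/

import Mathlib

/-- Empirical increasing convex order: `x ≼icx x'` iff
`(1/d) Σᵢ φ(xᵢ) ≤ (1/d) Σᵢ φ(x'ᵢ)` for every nondecreasing convex `φ : ℝ → ℝ`. -/
def EmpIcxOrd {d : ℕ} (x x' : Fin d → ℝ) : Prop :=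
  ∀ φ : ℝ → ℝ, Monotone φ → ConvexOn ℝ Set.univ φ →
    (d : ℝ)⁻¹ * ∑ i, φ (x i) ≤ (d : ℝ)⁻¹ * ∑ i, φ (x' i)

lemma phi_mono (t : ℝ) : Monotone (fun s : ℝ => max (s - t) 0) :=
  fun a b h => max_le_max (by linarith) le_rfl

lemma phi_convex (t : ℝ) : ConvexOn ℝ Set.univ (fun s : ℝ => max (s - t) 0) := by
  have h1 : ConvexOn ℝ Set.univ (fun s : ℝ => s - t) := by
    have := (convexOn_id (convex_univ : Convex ℝ (Set.univ : Set ℝ))).add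
      (convexOn_const (-t) convex_univ)
    convert this using 1 <;> rfl
  have h2 : ConvexOn ℝ Set.univ (fun _ : ℝ => (0 : ℝ)) := convexOn_const 0 convex_univ
  have := h1.sup h2
  convert this using 1 <;> rfl

/-- Counts above thresholds agree. -/
lemma count_gt_eq {d : ℕ} (x x' : Fin d → ℝ)
    (h : ∀ t : ℝ, ∑ i, max (x i - t) 0 = ∑ i, max (x' i - t) 0) (t : ℝ) :
    (Finset.univ.filter fun i => t < x i).card
      = (Finset.univ.filter fun i => t < x' i).card := by
  classical
  set S : Finset ℝ := Finset.image x Finset.univ ∪ Finset.image x' Finset.univ with hS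
  obtain ⟨t', htt', hgap⟩ : ∃ t', t < t' ∧ ∀ s ∈ S, t < s → t' ≤ s := by
    by_cases hT : (S.filter fun s => t < s).Nonempty
    · refine ⟨(S.filter fun s => t < s).min' hT, ?_, ?_⟩
      · have := (S.filter fun s => t < s).min'_mem hT
        exact (Finset.mem_filter.mp this).2
      · intro s hs hts
        exact Finset.min'_le _ s (Finset.mem_filter.mpr ⟨hs, hts⟩)
    · refine ⟨t + 1, by linarith, ?_⟩
      intro s hs hts
      exact absurd ⟨s, Finset.mem_filter.mpr ⟨hs, hts⟩⟩ hT
  have key : ∀ y : Fin d → ℝ, (∀ i, y i ∈ S) →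
      (∑ i, max (y i - t) 0) - (∑ i, max (y i - t') 0)
        = (t' - t) * (Finset.univ.filter fun i => t < y i).card := by
    intro y hy
    rw [← Finset.sum_sub_distrib]
    have step : ∀ i : Fin d,
        max (y i - t) 0 - max (y i - t') 0 = if t < y i then t' - t else 0 := by
      intro i
      by_cases hi : t < y i
      · have h1 : t' ≤ y i := hgap (y i) (hy i) hi
        rw [if_pos hi, max_eq_left (by linarith), max_eq_left (by linarith)]
        ring
      · push_neg at hi
        rw [if_neg (not_lt.mpr hi), max_eq_right (by linarith), max_eq_right (by linarith)]
        ring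
    rw [Finset.sum_congr rfl fun i _ => step i, Finset.sum_ite, Finset.sum_const,
      Finset.sum_const_zero, add_zero, nsmul_eq_mul, mul_comm]
  have hx : ∀ i, x i ∈ S := fun i => Finset.mem_union_left _ (Finset.mem_image_of_mem x (Finset.mem_univ i))
  have hx' : ∀ i, x' i ∈ S := fun i => Finset.mem_union_right _ (Finset.mem_image_of_mem x' (Finset.mem_univ i))
  have e1 := key x hx
  have e2 := key x' hx'
  rw [h t, h t', e2] at e1
  have := mul_left_cancel₀ (by linarith : t' - t ≠ 0) e1.symm
  exact_mod_cast this

/-- The multisets of values agree. -/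
lemma multiset_eq_of_counts {d : ℕ} (x x' : Fin d → ℝ)
    (h : ∀ t : ℝ, (Finset.univ.filter fun i => t < x i).card
      = (Finset.univ.filter fun i => t < x' i).card) :
    Multiset.map x Finset.univ.val = Multiset.map x' Finset.univ.val := by
  classical
  set S : Finset ℝ := Finset.image x Finset.univ ∪ Finset.image x' Finset.univ with hS
  have hx : ∀ i, x i ∈ S := fun i => Finset.mem_union_left _ (Finset.mem_image_of_mem x (Finset.mem_univ i))
  have hx' : ∀ i, x' i ∈ S := fun i => Finset.mem_union_right _ (Finset.mem_image_of_mem x' (Finset.mem_univ i))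
  have cardeq : ∀ a : ℝ, (Finset.univ.filter fun i => x i = a).card
      = (Finset.univ.filter fun i => x' i = a).card := by
    intro a
    obtain ⟨t₀, ht₀a, hgap⟩ : ∃ t₀, t₀ < a ∧ ∀ s ∈ S, s < a → s ≤ t₀ := by
      by_cases hT : (S.filter fun r => r < a).Nonempty
      · refine ⟨(S.filter fun r => r < a).max' hT, ?_, ?_⟩
        · have := (S.filter fun r => r < a).max'_mem hT
          exact (Finset.mem_filter.mp this).2
        · intro s hs hsa
          exact Finset.le_max' (S.filter fun r => r < a) s (Finset.mem_filter.mpr ⟨hs, hsa⟩)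
      · refine ⟨a - 1, by linarith, ?_⟩
        intro s hs hsa
        exact absurd ⟨s, Finset.mem_filter.mpr ⟨hs, hsa⟩⟩ hT
    have key : ∀ y : Fin d → ℝ, (∀ i, y i ∈ S) →
        (Finset.univ.filter fun i => y i = a)
          = (Finset.univ.filter fun i => t₀ < y i) \ (Finset.univ.filter fun i => a < y i) := by
      intro y hy
      ext i
      simp only [Finset.mem_filter, Finset.mem_sdiff, Finset.mem_univ, true_and, not_lt]
      constructor
      · rintro rfl
        exact ⟨ht₀a, le_rfl⟩
      · rintro ⟨h1, h2⟩
        have h2' : y i ≤ a := h2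
        rcases lt_or_eq_of_le h2' with hlt | heq
        · exact absurd (hgap (y i) (hy i) hlt) (not_le.mpr h1)
        · exact heq
    have sub : ∀ y : Fin d → ℝ,
        (Finset.univ.filter fun i => a < y i) ⊆ (Finset.univ.filter fun i => t₀ < y i) := by
      intro y i hi
      simp only [Finset.mem_filter, Finset.mem_univ, true_and] at hi ⊢
      linarith
    rw [key x hx, key x' hx', Finset.card_sdiff_of_subset (sub x), Finset.card_sdiff_of_subset (sub x'),
      h t₀, h a]
  refine Multiset.ext.mpr fun a => ?_
  rw [Multiset.count_map, Multiset.count_map]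
  have rw1 : ∀ y : Fin d → ℝ,
      Multiset.card (Multiset.filter (fun i => a = y i) Finset.univ.val)
        = (Finset.univ.filter fun i => y i = a).card := by
    intro y
    rw [Finset.card_def, Finset.filter_val]
    congr 1
    exact Multiset.filter_congr fun i _ => eq_comm
  rw [rw1 x, rw1 x', cardeq a]

lemma monotone_eq_of_multiset {d : ℕ} (u v : Fin d → ℝ) (hu : Monotone u) (hv : Monotone v)
    (h : Multiset.map u Finset.univ.val = Multiset.map v Finset.univ.val) : u = v := by
  have h' : (List.ofFn u : Multiset ℝ) = (List.ofFn v : Multiset ℝ) := by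
    rwa [← Fin.univ_val_map, ← Fin.univ_val_map]
  have hperm : (List.ofFn u).Perm (List.ofFn v) := Multiset.coe_eq_coe.mp h'
  have := List.Perm.eq_of_sortedLE hu.sortedLE_ofFn hv.sortedLE_ofFn hperm
  exact List.ofFn_injective this

theorem empIcxOrd_antisymm_up_to_permutation {d : ℕ} (x x' : Fin d → ℝ)
    (h1 : EmpIcxOrd x x') (h2 : EmpIcxOrd x' x) :
    (∃ π : Equiv.Perm (Fin d), ∀ i : Fin d, x' i = x (π i)) ∧
    (∀ u : Fin d → ℝ, Monotone u → EmpIcxOrd u u) ∧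
    (∀ u v w : Fin d → ℝ, Monotone u → Monotone v → Monotone w →
      EmpIcxOrd u v → EmpIcxOrd v w → EmpIcxOrd u w) ∧
    (∀ u v : Fin d → ℝ, Monotone u → Monotone v →
      EmpIcxOrd u v → EmpIcxOrd v u → u = v) := by
  classical
  -- multiset equality from the two order relations
  have multi : ∀ y y' : Fin d → ℝ, EmpIcxOrd y y' → EmpIcxOrd y' y →
      Multiset.map y Finset.univ.val = Multiset.map y' Finset.univ.val := by
    intro y y' hy hy'
    have hsum : ∀ t : ℝ, ∑ i, max (y i - t) 0 = ∑ i, max (y' i - t) 0 := by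
      intro t
      rcases Nat.eq_zero_or_pos d with hd | hd
      · subst hd; simp
      · have hpos : (0 : ℝ) < (d : ℝ)⁻¹ := by positivity
        have l1 := hy _ (phi_mono t) (phi_convex t)
        have l2 := hy' _ (phi_mono t) (phi_convex t)
        have := le_antisymm l1 l2
        exact mul_left_cancel₀ (ne_of_gt hpos) this
    exact multiset_eq_of_counts y y' (count_gt_eq y y' hsum)
  have hmx := multi x x' h1 h2
  refine ⟨?_, ?_, ?_, ?_⟩
  · -- permutation
    set σ := Tuple.sort x
    set τ := Tuple.sort x'
    have hms : Multiset.map (x ∘ σ) Finset.univ.val = Multiset.map (x' ∘ τ) Finset.univ.val := by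
      rw [← Multiset.map_map, ← Multiset.map_map, Multiset.map_univ_val_equiv,
        Multiset.map_univ_val_equiv, hmx]
    have heq : x ∘ σ = x' ∘ τ :=
      monotone_eq_of_multiset _ _ (Tuple.monotone_sort x) (Tuple.monotone_sort x') hms
    refine ⟨τ.symm.trans σ, fun i => ?_⟩
    have := congrFun heq (τ.symm i)
    simp only [Function.comp_apply, Equiv.apply_symm_apply] at this
    simp [this.symm]
  · intro u _ φ _ _; exact le_rfl
  · intro u v w _ _ _ huv hvw φ hφm hφc
    exact le_trans (huv φ hφm hφc) (hvw φ hφm hφc)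
  · intro u v hu hv huv hvu
    exact monotone_eq_of_multiset u v hu hv (multi u v huv hvu)
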